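/- Let t* ∈ (0, ∞) be finite, let c1, c2, c3 > 0, and let φ : [0, t*) → ℝ be continuous on [0, t*), differentiable on (0, t*), with φ(0) > 0, φ(t) > 0 for all t, φ(t) → ∞ as t → t*⁻, and φ'(t) ≤ c1·φ(t) + c2·φ(t)^{3/2} + c3·φ(t)² for all t ∈ (0, t*). Then the function τ ↦ 1/(c1·τ + c2·τ^{3/2} + c3·τ²) is integrable on [φ(0), ∞) and t* ≥ ∫_{φ(0)}^{∞} dτ/(c1·τ + c2·τ^{3/2} + c3·τ²). -/

import Mathlib

open Real Set Filter MeasureTheory Topology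

theorem blow_up_time_integral_lower_bound_2D
    (tstar c1 c2 c3 : ℝ) (htstar : 0 < tstar)
    (hc1 : 0 < c1) (hc2 : 0 < c2) (hc3 : 0 < c3)
    (φ : ℝ → ℝ)
    (hcont : ContinuousOn φ (Ico 0 tstar))
    (hdiff : ∀ t ∈ Ioo 0 tstar, DifferentiableAt ℝ φ t)
    (hφ0 : 0 < φ 0)
    (hpos : ∀ t ∈ Ico 0 tstar, 0 < φ t)
    (hblow : Tendsto φ (nhdsWithin tstar (Iio tstar)) atTop)
    (hineq : ∀ t ∈ Ioo 0 tstar,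
      deriv φ t ≤ c1 * φ t + c2 * φ t ^ ((3 : ℝ) / 2) + c3 * φ t ^ 2) :
    IntegrableOn (fun τ : ℝ => 1 / (c1 * τ + c2 * τ ^ ((3 : ℝ) / 2) + c3 * τ ^ 2))
      (Ici (φ 0)) ∧
    tstar ≥ ∫ τ in Ici (φ 0), 1 / (c1 * τ + c2 * τ ^ ((3 : ℝ) / 2) + c3 * τ ^ 2) := by
  set a := φ 0 with ha
  set g : ℝ → ℝ := fun τ => c1 * τ + c2 * τ ^ ((3 : ℝ) / 2) + c3 * τ ^ 2 with hgdef
  set f : ℝ → ℝ := fun τ => 1 / g τ with hfdef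
  have hgpos : ∀ x : ℝ, 0 < x → 0 < g x := by
    intro x hx
    have h1 : 0 < c1 * x := mul_pos hc1 hx
    have h2 : 0 ≤ c2 * x ^ ((3 : ℝ) / 2) :=
      mul_nonneg hc2.le (Real.rpow_nonneg hx.le _)
    have h3 : 0 < c3 * x ^ 2 := mul_pos hc3 (pow_pos hx 2)
    simp only [hgdef]; linarith
  have hgcont : ∀ x : ℝ, 0 < x → ContinuousAt g x := by
    intro x hx
    have h2 : ContinuousAt (fun τ : ℝ => τ ^ ((3 : ℝ) / 2)) x :=
      Real.continuousAt_rpow_const x _ (Or.inl hx.ne')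
    exact ((continuousAt_const.mul continuousAt_id).add
      (continuousAt_const.mul h2)).add
      (continuousAt_const.mul (continuousAt_id.pow 2))
  have hfcont : ∀ x : ℝ, 0 < x → ContinuousAt f x := fun x hx =>
    continuousAt_const.div (hgcont x hx) (hgpos x hx).ne'
  have hfnonneg : ∀ x : ℝ, 0 < x → 0 ≤ f x := fun x hx =>
    le_of_lt (by simpa [hfdef] using (hgpos x hx))
  -- integrability
  have hmeas : AEStronglyMeasurable f (volume.restrict (Ici a)) := by
    have hco : ContinuousOn f (Ici a) :=
      fun x hx => (hfcont x (lt_of_lt_of_le hφ0 hx)).continuousWithinAt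
    exact hco.aestronglyMeasurable measurableSet_Ici
  have hdom : IntegrableOn (fun τ : ℝ => c3⁻¹ * τ ^ (-2 : ℝ)) (Ici a) := by
    rw [integrableOn_Ici_iff_integrableOn_Ioi]
    exact (integrableOn_Ioi_rpow_of_lt (by norm_num) hφ0).const_mul _
  have hbound : ∀ x : ℝ, a ≤ x → ‖f x‖ ≤ c3⁻¹ * x ^ (-2 : ℝ) := by
    intro x hx
    have hxpos : 0 < x := lt_of_lt_of_le hφ0 hx
    have h1 : c3 * x ^ 2 ≤ g x := by
      have h2 : 0 ≤ c2 * x ^ ((3 : ℝ) / 2) :=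
        mul_nonneg hc2.le (Real.rpow_nonneg hxpos.le _)
      have h3 : 0 < c1 * x := mul_pos hc1 hxpos
      simp only [hgdef]; linarith
    have hrw : c3⁻¹ * x ^ (-2 : ℝ) = 1 / (c3 * x ^ 2) := by
      rw [Real.rpow_neg hxpos.le, one_div, mul_inv]
      norm_num [Real.rpow_two]
    rw [Real.norm_eq_abs, abs_of_nonneg (hfnonneg x hxpos), hrw]
    exact one_div_le_one_div_of_le (mul_pos hc3 (pow_pos hxpos 2)) h1
  have hint : IntegrableOn f (Ici a) := by
    refine hdom.mono' hmeas ?_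
    filter_upwards [self_mem_ae_restrict (measurableSet_Ici : MeasurableSet (Ici a))]
      with x hx
    exact hbound x hx
  refine ⟨hint, ?_⟩
  -- the antiderivative
  set F : ℝ → ℝ := fun x => ∫ τ in a..x, f τ with hFdef
  have hii : ∀ x y : ℝ, 0 < x → 0 < y → IntervalIntegrable f volume x y := by
    intro x y hx hy
    apply ContinuousOn.intervalIntegrable
    intro z hz
    exact (hfcont z (lt_of_lt_of_le (lt_min hx hy) hz.1)).continuousWithinAt
  have hFderiv : ∀ x : ℝ, 0 < x → HasDerivAt F (f x) x := by
    intro x hx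
    have hco : ContinuousOn f (Ioi 0) := fun z hz => (hfcont z hz).continuousWithinAt
    exact intervalIntegral.integral_hasDerivAt_right (hii a x hφ0 hx)
      ⟨Ioi 0, Ioi_mem_nhds hx, hco.aestronglyMeasurable measurableSet_Ioi⟩ (hfcont x hx)
  -- F (φ t) ≤ t on [0, tstar)
  have hFle : ∀ t ∈ Ico 0 tstar, F (φ t) ≤ t := by
    have hmono : MonotoneOn (fun t => t - F (φ t)) (Ico 0 tstar) := by
      have hψd : ∀ t ∈ Ioo 0 tstar,
          HasDerivAt (fun t => t - F (φ t)) (1 - f (φ t) * deriv φ t) t := by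
        intro t ht
        have hφt : 0 < φ t := hpos t (Ioo_subset_Ico_self ht)
        have hcomp : HasDerivAt (fun t => F (φ t)) (f (φ t) * deriv φ t) t :=
          (hFderiv (φ t) hφt).comp t (hdiff t ht).hasDerivAt
        exact (hasDerivAt_id t).sub hcomp
      refine monotoneOn_of_deriv_nonneg (convex_Ico 0 tstar) ?_ ?_ ?_
      · refine (continuousOn_id.sub ?_)
        refine ContinuousOn.comp (fun x hx => (hFderiv x hx).continuousAt.continuousWithinAt)
          hcont hpos
      · rw [interior_Ico]
        exact fun t ht => ((hψd t ht).differentiableAt).differentiableWithinAt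
      · rw [interior_Ico]
        intro t ht
        rw [(hψd t ht).deriv]
        have hφt : 0 < φ t := hpos t (Ioo_subset_Ico_self ht)
        have h1 : f (φ t) * deriv φ t ≤ f (φ t) * g (φ t) :=
          mul_le_mul_of_nonneg_left (hineq t ht) (hfnonneg _ hφt)
        have h2 : f (φ t) * g (φ t) = 1 := by
          simp only [hfdef]
          field_simp
          exact div_self (hgpos _ hφt).ne'
        linarith [h1.trans_eq h2]
    intro t ht
    have h0 : (0 : ℝ) ∈ Ico (0:ℝ) tstar := ⟨le_refl 0, htstar⟩
    have := hmono h0 ht ht.1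
    simp only [hFdef, ← ha, intervalIntegral.integral_same] at this
    linarith
  -- conclude
  have htend : Tendsto F atTop (𝓝 (∫ τ in Ioi a, f τ)) :=
    intervalIntegral_tendsto_integral_Ioi a (hint.mono_set Ioi_subset_Ici_self) tendsto_id
  have hev : ∀ᶠ x in atTop, F x ≤ tstar := by
    filter_upwards [eventually_ge_atTop a] with x hx
    have hxpos : 0 < x := lt_of_lt_of_le hφ0 hx
    -- find t with φ t ≥ x
    have h1 : ∀ᶠ t in nhdsWithin tstar (Iio tstar), x ≤ φ t :=
      hblow.eventually (eventually_ge_atTop x)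
    have h2 : Ioo 0 tstar ∈ nhdsWithin tstar (Iio tstar) :=
      Ioo_mem_nhdsLT_of_mem ⟨htstar, le_refl tstar⟩
    obtain ⟨t, ht1, ht2⟩ := (h1.and (eventually_of_mem h2 (fun t ht => ht))).exists
    have hφt : 0 < φ t := hpos t (Ioo_subset_Ico_self ht2)
    have hmonoF : F x ≤ F (φ t) := by
      have hsplit : F (φ t) = F x + ∫ τ in x..(φ t), f τ := by
        rw [hFdef]
        exact (intervalIntegral.integral_add_adjacent_intervals
          (hii a x hφ0 hxpos) (hii x (φ t) hxpos hφt)).symm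
      have hnn : 0 ≤ ∫ τ in x..(φ t), f τ := by
        apply intervalIntegral.integral_nonneg ht1
        intro u hu
        exact hfnonneg u (lt_of_lt_of_le hxpos hu.1)
      linarith
    exact hmonoF.trans ((hFle t (Ioo_subset_Ico_self ht2)).trans (le_of_lt ht2.2))
  have : (∫ τ in Ioi a, f τ) ≤ tstar := le_of_tendsto htend hev
  rw [ge_iff_le, MeasureTheory.integral_Ici_eq_integral_Ioi]
  exact this
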